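/- With notation as in the context, assume the four identity families (Ic), (Ia), (IIa), (IIIa) hold over R. Set F := γ·x_o³ + A + ε·B over DualNumber R, and define on the free module M with basis e_1,…,e_n,e_o over the polynomial ring (DualNumber R)[x_1,…,x_n,x_o] the bilinear product e_α ⋆ e_β = Σ_{ν∈{1,…,n,o}} Δ_ν (∂_α∂_β∂_ν F) e_ν and the bilinear pairing (e_α, e_β) = δ_{αβ} Δ_α^{-1}. Then ⋆ is commutative and associative, and (a ⋆ b, c) = (a, b ⋆ c) for all a, b, c ∈ M; that is, (M, ⋆, (−,−)) is a (not necessarily unital) Frobenius algebra. -/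

import Mathlib

open MvPolynomial

/-- Third partial derivative `∂ᵢ∂ⱼ∂ₖ F` of a multivariate polynomial. -/
noncomputable def D3 {R : Type*} [CommRing R] {m : ℕ} (F : MvPolynomial (Fin m) R)
    (i j k : Fin m) : MvPolynomial (Fin m) R :=
  pderiv i (pderiv j (pderiv k F))

/-- The quantum product associated to a potential `F` with respect to the inverse diagonal
metric entries `Δ`: the bilinear product on the free module determined by
`e_α ⋆ e_β = Σ_ν Δ_ν (∂_α∂_β∂_ν F) e_ν`. -/
noncomputable def qmul {R : Type*} [CommRing R] {n : ℕ} (Δ : Fin n → Rˣ)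
    (F : MvPolynomial (Fin n) R) (a b : Fin n → MvPolynomial (Fin n) R) :
    Fin n → MvPolynomial (Fin n) R :=
  fun ν => ∑ i, ∑ j, a i * b j * (C (Δ ν : R) * D3 F i j ν)

/-- The pairing associated to `Δ`: the bilinear form with `(e_α, e_β) = δ_{αβ} Δ_α⁻¹`. -/
noncomputable def qpair {R : Type*} [CommRing R] {n : ℕ} (Δ : Fin n → Rˣ)
    (a b : Fin n → MvPolynomial (Fin n) R) : MvPolynomial (Fin n) R :=
  ∑ i, a i * b i * C (((Δ i)⁻¹ : Rˣ) : R)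

theorem pderiv_comm' {R σ : Type*} [CommSemiring R] (i j : σ) (p : MvPolynomial σ R) :
    pderiv i (pderiv j p) = pderiv j (pderiv i p) := by
  classical
  induction p using MvPolynomial.induction_on with
  | C a => simp
  | add p q hp hq => simp [hp, hq]
  | mul_X p k hp =>
    simp only [pderiv_mul, pderiv_X, map_add, hp]
    by_cases hik : k = i <;> by_cases hjk : k = j <;>
      simp [Pi.single_apply, hik, hjk, apply_ite (pderiv i), apply_ite (pderiv j)] <;> ring

section D3lemmas

variable {R : Type*} [CommRing R] {m : ℕ} (p : MvPolynomial (Fin m) R)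

theorem D3_symm12 (i j k : Fin m) : D3 p i j k = D3 p j i k := pderiv_comm' i j _

theorem D3_symm23 (i j k : Fin m) : D3 p i j k = D3 p i k j := by
  unfold D3; rw [pderiv_comm' j k]

theorem D3_rot (i j k : Fin m) : D3 p i j k = D3 p j k i := by
  rw [D3_symm12, D3_symm23]

theorem D3_map {S : Type*} [CommRing S] (f : R →+* S) (i j k : Fin m) :
    D3 (MvPolynomial.map f p) i j k = MvPolynomial.map f (D3 p i j k) := by
  simp [D3, pderiv_map]

end D3lemmas

theorem D3_cube {S : Type*} [CommRing S] {n : ℕ} (c : S) (i j k : Fin (n+1)) :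
    D3 (C c * X (Fin.last n) ^ 3 : MvPolynomial (Fin (n+1)) S) i j k =
      if i = Fin.last n ∧ j = Fin.last n ∧ k = Fin.last n then C (6 * c) else 0 := by
  classical
  unfold D3
  have hcube : (C c * X (Fin.last n) ^ 3 : MvPolynomial (Fin (n+1)) S)
      = C c * (X (Fin.last n) * (X (Fin.last n) * X (Fin.last n))) := by ring
  have hC6 : (C (6 * c) : MvPolynomial (Fin (n+1)) S) = 6 * C c := by
    rw [map_mul, map_ofNat]
  rw [hcube]
  by_cases hk : k = Fin.last n
  · by_cases hj : j = Fin.last n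
    · by_cases hi : i = Fin.last n <;>
        simp [hi, hj, hk, pderiv_mul, pderiv_C_mul, pderiv_X_self,
          pderiv_X_of_ne, hC6] <;> ring
    · simp [hj, hk, pderiv_mul, pderiv_C_mul, pderiv_X_self,
        pderiv_X_of_ne (fun h => hj h.symm)]
  · simp [hk, pderiv_mul, pderiv_C_mul, pderiv_X_of_ne (fun h => hk h.symm)]

section sums

variable {M : Type*} [AddCommMonoid M] {m m' m'' : ℕ}

theorem sum_comm3 (f : Fin m → Fin m' → Fin m'' → M) :
    (∑ a, ∑ b, ∑ c, f a b c) = ∑ b, ∑ c, ∑ a, f a b c := by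
  rw [Finset.sum_comm]
  exact Finset.sum_congr rfl fun b _ => Finset.sum_comm

theorem sum_cycle4 {k : ℕ} (f : Fin m → Fin m' → Fin m'' → Fin k → M) :
    (∑ a, ∑ b, ∑ c, ∑ d, f a b c d) = ∑ b, ∑ c, ∑ d, ∑ a, f a b c d := by
  rw [Finset.sum_comm]
  refine Finset.sum_congr rfl fun b _ => ?_
  rw [Finset.sum_comm]
  exact Finset.sum_congr rfl fun c _ => Finset.sum_comm

theorem sum_comm4 {k : ℕ} (f : Fin m → Fin m' → Fin m'' → Fin k → M) :
    (∑ p, ∑ q, ∑ i, ∑ j, f p q i j) = ∑ i, ∑ j, ∑ q, ∑ p, f p q i j := by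
  rw [sum_cycle4, sum_cycle4]
  exact Finset.sum_congr rfl fun i _ => Finset.sum_congr rfl fun j _ => Finset.sum_comm

end sums

section qlemmas

variable {R : Type*} [CommRing R] {m : ℕ} (Δ : Fin m → Rˣ) (F : MvPolynomial (Fin m) R)
  (a b c : Fin m → MvPolynomial (Fin m) R)

theorem qmul_comm' : qmul Δ F a b = qmul Δ F b a := by
  funext ν
  unfold qmul
  rw [Finset.sum_comm]
  exact Finset.sum_congr rfl fun i _ => Finset.sum_congr rfl fun j _ => by
    rw [D3_symm12]; ring

theorem qmul_qmul_left : qmul Δ F (qmul Δ F a b) c = fun μ => ∑ i, ∑ j, ∑ q,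
    a i * b j * c q *
      (C ((Δ μ : R)) * ∑ p, C ((Δ p : R)) * (D3 F i j p * D3 F p q μ)) := by
  funext μ
  unfold qmul
  calc (∑ p, ∑ q, (∑ i, ∑ j, a i * b j * (C ((Δ p : R)) * D3 F i j p)) * c q *
          (C ((Δ μ : R)) * D3 F p q μ))
      = ∑ p, ∑ q, ∑ i, ∑ j, a i * b j * c q *
          (C ((Δ μ : R)) * (C ((Δ p : R)) * (D3 F i j p * D3 F p q μ))) := by
        refine Finset.sum_congr rfl fun p _ => Finset.sum_congr rfl fun q _ => ?_
        simp only [Finset.sum_mul]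
        exact Finset.sum_congr rfl fun i _ => Finset.sum_congr rfl fun j _ => by ring
    _ = ∑ i, ∑ j, ∑ q, ∑ p, a i * b j * c q *
          (C ((Δ μ : R)) * (C ((Δ p : R)) * (D3 F i j p * D3 F p q μ))) := sum_comm4 _
    _ = ∑ i, ∑ j, ∑ q, a i * b j * c q *
          (C ((Δ μ : R)) * ∑ p, C ((Δ p : R)) * (D3 F i j p * D3 F p q μ)) := by
        refine Finset.sum_congr rfl fun i _ => Finset.sum_congr rfl fun j _ =>
          Finset.sum_congr rfl fun q _ => ?_
        rw [Finset.mul_sum, Finset.mul_sum]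

theorem qmul_qmul_right : qmul Δ F a (qmul Δ F b c) = fun μ => ∑ i, ∑ j, ∑ q,
    a i * b j * c q *
      (C ((Δ μ : R)) * ∑ p, C ((Δ p : R)) * (D3 F j q p * D3 F p i μ)) := by
  funext μ
  unfold qmul
  calc (∑ i, ∑ p, a i * (∑ j, ∑ q, b j * c q * (C ((Δ p : R)) * D3 F j q p)) *
          (C ((Δ μ : R)) * D3 F i p μ))
      = ∑ i, ∑ p, ∑ j, ∑ q, a i * b j * c q *
          (C ((Δ μ : R)) * (C ((Δ p : R)) * (D3 F j q p * D3 F p i μ))) := by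
        refine Finset.sum_congr rfl fun i _ => Finset.sum_congr rfl fun p _ => ?_
        simp only [Finset.sum_mul, Finset.mul_sum]
        refine Finset.sum_congr rfl fun j _ => Finset.sum_congr rfl fun q _ => ?_
        rw [D3_symm12 F i p μ]; ring
    _ = ∑ i, ∑ j, ∑ q, ∑ p, a i * b j * c q *
          (C ((Δ μ : R)) * (C ((Δ p : R)) * (D3 F j q p * D3 F p i μ))) :=
        Finset.sum_congr rfl fun i _ => sum_comm3 _
    _ = ∑ i, ∑ j, ∑ q, a i * b j * c q *
          (C ((Δ μ : R)) * ∑ p, C ((Δ p : R)) * (D3 F j q p * D3 F p i μ)) := by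
        refine Finset.sum_congr rfl fun i _ => Finset.sum_congr rfl fun j _ =>
          Finset.sum_congr rfl fun q _ => ?_
        rw [Finset.mul_sum, Finset.mul_sum]

theorem qpair_qmul_left : qpair Δ (qmul Δ F a b) c =
    ∑ q, ∑ i, ∑ j, a i * b j * c q * D3 F i j q := by
  unfold qpair qmul
  refine Finset.sum_congr rfl fun q _ => ?_
  simp only [Finset.sum_mul]
  refine Finset.sum_congr rfl fun i _ => Finset.sum_congr rfl fun j _ => ?_
  have h1 : (C ((Δ q : R)) : MvPolynomial (Fin m) R) * C (((Δ q)⁻¹ : Rˣ) : R) = 1 := by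
    rw [← map_mul, Units.mul_inv, map_one]
  linear_combination a i * b j * c q * D3 F i j q * h1

theorem qpair_qmul_right : qpair Δ a (qmul Δ F b c) =
    ∑ i, ∑ j, ∑ q, a i * b j * c q * D3 F i j q := by
  unfold qpair qmul
  refine Finset.sum_congr rfl fun i _ => ?_
  simp only [Finset.mul_sum, Finset.sum_mul]
  refine Finset.sum_congr rfl fun j _ => Finset.sum_congr rfl fun q _ => ?_
  have h1 : (C ((Δ i : R)) : MvPolynomial (Fin m) R) * C (((Δ i)⁻¹ : Rˣ) : R) = 1 := by
    rw [← map_mul, Units.mul_inv, map_one]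
  have h2 : D3 F j q i = D3 F i j q := by rw [D3_rot F i j q]
  linear_combination a i * b j * c q * D3 F i j q * h1 + a i * (b j * (c q * C ((Δ i : R)))) * C (((Δ i)⁻¹ : Rˣ) : R) * h2

end qlemmas

instance isRightCancelAdd_of_addGroup {M : Type*} [AddGroup M] : IsRightCancelAdd M :=
  inferInstance

theorem D3_symm13 {R : Type*} [CommRing R] {m : ℕ} (p : MvPolynomial (Fin m) R)
    (i j k : Fin m) : D3 p i j k = D3 p k j i := by
  rw [D3_rot, D3_symm12]

set_option maxHeartbeats 4000000 in
theorem open_potential_frobenius_algebra {R : Type*} [CommRing R] {n : ℕ}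
    (Δ : Fin n → Rˣ) (γ : R)
    (A B : MvPolynomial (Fin (n + 1)) R) (hA : pderiv (Fin.last n) A = 0)
    -- (Ic)
    (hIc : ∀ i j k l : Fin n,
        ∑ ν, C (Δ ν : R) * D3 A i.castSucc j.castSucc ν.castSucc *
              D3 A ν.castSucc k.castSucc l.castSucc =
        ∑ ν, C (Δ ν : R) * D3 A j.castSucc k.castSucc ν.castSucc *
              D3 A ν.castSucc i.castSucc l.castSucc)
    -- (Ia)
    (hIa : ∀ i j k l : Fin n,
        ∑ ν, C (Δ ν : R) * (D3 A i.castSucc j.castSucc ν.castSucc *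
              D3 B ν.castSucc k.castSucc l.castSucc +
              D3 B i.castSucc j.castSucc ν.castSucc *
              D3 A ν.castSucc k.castSucc l.castSucc) =
        ∑ ν, C (Δ ν : R) * (D3 A j.castSucc k.castSucc ν.castSucc *
              D3 B ν.castSucc i.castSucc l.castSucc +
              D3 B j.castSucc k.castSucc ν.castSucc *
              D3 A ν.castSucc i.castSucc l.castSucc))
    -- (IIa)
    (hIIa : ∀ i j k : Fin n,
        ∑ ν, C (Δ ν : R) * D3 A i.castSucc j.castSucc ν.castSucc *
              D3 B ν.castSucc k.castSucc (Fin.last n) =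
        ∑ ν, C (Δ ν : R) * D3 A j.castSucc k.castSucc ν.castSucc *
              D3 B ν.castSucc i.castSucc (Fin.last n))
    -- (IIIa)
    (hIIIa : ∀ i j : Fin n,
        ∑ ν, C (Δ ν : R) * D3 A i.castSucc j.castSucc ν.castSucc *
              D3 B ν.castSucc (Fin.last n) (Fin.last n) +
          C (6 * γ) * D3 B i.castSucc j.castSucc (Fin.last n) = 0) :
    ∀ ΔD : Fin (n + 1) → (DualNumber R)ˣ,
      ΔD = (fun ν => Units.map (algebraMap R (DualNumber R)).toMonoidHom
              ((Fin.snoc Δ 1 : Fin (n+1) → Rˣ) ν)) →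
    ∀ F : MvPolynomial (Fin (n + 1)) (DualNumber R),
      F = C (algebraMap R (DualNumber R) γ) * X (Fin.last n) ^ 3 +
            MvPolynomial.map (algebraMap R (DualNumber R)) A +
            C DualNumber.eps * MvPolynomial.map (algebraMap R (DualNumber R)) B →
      ((∀ a b, qmul ΔD F a b = qmul ΔD F b a) ∧
       (∀ a b c, qmul ΔD F (qmul ΔD F a b) c = qmul ΔD F a (qmul ΔD F b c)) ∧
       (∀ a b c, qpair ΔD (qmul ΔD F a b) c = qpair ΔD a (qmul ΔD F b c))) := by
  classical
  intro ΔD hΔ F hF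
  have hΔc : ∀ ν : Fin n, ((ΔD ν.castSucc : DualNumber R))
      = algebraMap R (DualNumber R) (Δ ν) := by
    intro ν; rw [hΔ]; simp
  have hΔo : ((ΔD (Fin.last n) : DualNumber R)) = 1 := by
    rw [hΔ]; simp
  have hcs : ∀ x : Fin n, x.castSucc ≠ Fin.last n := fun x => (Fin.castSucc_lt_last x).ne
  have hA1 : ∀ x y : Fin (n+1), D3 A x y (Fin.last n) = 0 := by
    intro x y; simp [D3, hA]
  have hA2 : ∀ x y : Fin (n+1), D3 A x (Fin.last n) y = 0 := by
    intro x y; rw [D3_symm23]; exact hA1 x y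
  have hA3 : ∀ x y : Fin (n+1), D3 A (Fin.last n) x y = 0 := by
    intro x y; rw [D3_symm12, D3_symm23]; exact hA1 x y
  have hee : (C DualNumber.eps : MvPolynomial (Fin (n+1)) (DualNumber R))
      * C DualNumber.eps = 0 := by
    rw [← map_mul, DualNumber.eps_mul_eps, map_zero]
  have hD3F : ∀ α β ν : Fin (n+1), D3 F α β ν =
      (if α = Fin.last n ∧ β = Fin.last n ∧ ν = Fin.last n
        then C (algebraMap R (DualNumber R) (6 * γ)) else 0)
      + MvPolynomial.map (algebraMap R (DualNumber R)) (D3 A α β ν)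
      + C DualNumber.eps * MvPolynomial.map (algebraMap R (DualNumber R)) (D3 B α β ν) := by
    intro α β ν
    rw [hF]
    have hsplit : D3 (C (algebraMap R (DualNumber R) γ) * X (Fin.last n) ^ 3 +
        MvPolynomial.map (algebraMap R (DualNumber R)) A +
        C DualNumber.eps * MvPolynomial.map (algebraMap R (DualNumber R)) B) α β ν =
        D3 (C (algebraMap R (DualNumber R) γ) * X (Fin.last n) ^ 3) α β ν +
        D3 (MvPolynomial.map (algebraMap R (DualNumber R)) A) α β ν +
        C DualNumber.eps * D3 (MvPolynomial.map (algebraMap R (DualNumber R)) B) α β ν := by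
      simp [D3, pderiv_C_mul]
    rw [hsplit, D3_cube, D3_map, D3_map]
    rw [show (6 : DualNumber R) * algebraMap R (DualNumber R) γ
        = algebraMap R (DualNumber R) (6 * γ) by rw [map_mul, map_ofNat]]
  have key : ∀ i j k l : Fin (n+1),
      (∑ p, C ((ΔD p : DualNumber R)) * (D3 F i j p * D3 F p k l)) =
        MvPolynomial.map (algebraMap R (DualNumber R))
          (∑ ν, C (Δ ν : R) * (D3 A i j ν.castSucc * D3 A ν.castSucc k l))
        + C DualNumber.eps * MvPolynomial.map (algebraMap R (DualNumber R))
          (∑ ν, C (Δ ν : R) * (D3 A i j ν.castSucc * D3 B ν.castSucc k l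
              + D3 B i j ν.castSucc * D3 A ν.castSucc k l))
        + (if i = Fin.last n ∧ j = Fin.last n
            then C (algebraMap R (DualNumber R) (6 * γ)) else 0)
          * (if k = Fin.last n ∧ l = Fin.last n
            then C (algebraMap R (DualNumber R) (6 * γ)) else 0)
        + C DualNumber.eps *
          ((if i = Fin.last n ∧ j = Fin.last n
              then C (algebraMap R (DualNumber R) (6 * γ)) else 0)
              * MvPolynomial.map (algebraMap R (DualNumber R)) (D3 B (Fin.last n) k l)
            + (if k = Fin.last n ∧ l = Fin.last n
              then C (algebraMap R (DualNumber R) (6 * γ)) else 0)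
              * MvPolynomial.map (algebraMap R (DualNumber R)) (D3 B i j (Fin.last n))) := by
    intro i j k l
    rw [Fin.sum_univ_castSucc]
    have hstep : ∀ ν : Fin n,
        C ((ΔD ν.castSucc : DualNumber R)) *
          (D3 F i j ν.castSucc * D3 F ν.castSucc k l)
        = MvPolynomial.map (algebraMap R (DualNumber R))
            (C (Δ ν : R) * (D3 A i j ν.castSucc * D3 A ν.castSucc k l))
          + C DualNumber.eps * MvPolynomial.map (algebraMap R (DualNumber R))
            (C (Δ ν : R) * (D3 A i j ν.castSucc * D3 B ν.castSucc k l
              + D3 B i j ν.castSucc * D3 A ν.castSucc k l)) := by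
      intro ν
      rw [hD3F i j ν.castSucc, hD3F ν.castSucc k l, hΔc ν,
        if_neg (by simp [hcs ν]), if_neg (by simp [hcs ν])]
      simp only [map_mul, map_add, MvPolynomial.map_C, zero_add]
      linear_combination (C (algebraMap R (DualNumber R) (Δ ν)) : MvPolynomial (Fin (n+1)) (DualNumber R)) *
        MvPolynomial.map (algebraMap R (DualNumber R)) (D3 B i j ν.castSucc) *
        MvPolynomial.map (algebraMap R (DualNumber R)) (D3 B ν.castSucc k l) * hee
    have hlast :
        C ((ΔD (Fin.last n) : DualNumber R)) *
          (D3 F i j (Fin.last n) * D3 F (Fin.last n) k l)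
        = (if i = Fin.last n ∧ j = Fin.last n
            then C (algebraMap R (DualNumber R) (6 * γ)) else 0)
          * (if k = Fin.last n ∧ l = Fin.last n
            then C (algebraMap R (DualNumber R) (6 * γ)) else 0)
        + C DualNumber.eps *
          ((if i = Fin.last n ∧ j = Fin.last n
              then C (algebraMap R (DualNumber R) (6 * γ)) else 0)
              * MvPolynomial.map (algebraMap R (DualNumber R)) (D3 B (Fin.last n) k l)
            + (if k = Fin.last n ∧ l = Fin.last n
              then C (algebraMap R (DualNumber R) (6 * γ)) else 0)
              * MvPolynomial.map (algebraMap R (DualNumber R)) (D3 B i j (Fin.last n))) := by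
      rw [hD3F i j (Fin.last n), hD3F (Fin.last n) k l, hΔo, hA1, hA3]
      simp only [map_zero, add_zero, zero_add, map_one, one_mul, and_true, true_and,
        eq_self_iff_true]
      linear_combination MvPolynomial.map (algebraMap R (DualNumber R)) (D3 B i j (Fin.last n)) *
        MvPolynomial.map (algebraMap R (DualNumber R)) (D3 B (Fin.last n) k l) * hee
    rw [Finset.sum_congr rfl fun ν _ => hstep ν, Finset.sum_add_distrib,
      ← map_sum, ← Finset.mul_sum, ← map_sum, hlast]
    ring
  have hIc' : ∀ i j k l : Fin n,
      (∑ ν, C (Δ ν : R) * (D3 A i.castSucc j.castSucc ν.castSucc *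
          D3 A ν.castSucc k.castSucc l.castSucc)) =
      ∑ ν, C (Δ ν : R) * (D3 A j.castSucc k.castSucc ν.castSucc *
          D3 A ν.castSucc i.castSucc l.castSucc) := by
    intro i j k l; simpa only [mul_assoc] using hIc i j k l
  have hIIa' : ∀ i j k : Fin n,
      (∑ ν, C (Δ ν : R) * (D3 A i.castSucc j.castSucc ν.castSucc *
          D3 B ν.castSucc k.castSucc (Fin.last n))) =
      ∑ ν, C (Δ ν : R) * (D3 A j.castSucc k.castSucc ν.castSucc *
          D3 B ν.castSucc i.castSucc (Fin.last n)) := by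
    intro i j k; simpa only [mul_assoc] using hIIa i j k
  have hIIIa' : ∀ i j : Fin n,
      (∑ ν, C (Δ ν : R) * (D3 A i.castSucc j.castSucc ν.castSucc *
          D3 B ν.castSucc (Fin.last n) (Fin.last n))) +
        C (6 * γ) * D3 B i.castSucc j.castSucc (Fin.last n) = 0 := by
    intro i j; simpa only [mul_assoc] using hIIIa i j
  have e_oo : ∀ k l : Fin n,
      (∑ ν, C (Δ ν : R) * (D3 B (Fin.last n) (Fin.last n) ν.castSucc *
          D3 A ν.castSucc k.castSucc l.castSucc)) +
        C (6 * γ) * D3 B (Fin.last n) k.castSucc l.castSucc = 0 := by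
    intro k l
    rw [show (∑ ν, C (Δ ν : R) * (D3 B (Fin.last n) (Fin.last n) ν.castSucc *
          D3 A ν.castSucc k.castSucc l.castSucc)) =
        ∑ ν, C (Δ ν : R) * (D3 A k.castSucc l.castSucc ν.castSucc *
          D3 B ν.castSucc (Fin.last n) (Fin.last n)) from
      Finset.sum_congr rfl fun ν _ => by
        rw [D3_symm13 B (Fin.last n) (Fin.last n) ν.castSucc,
          D3_rot A ν.castSucc k.castSucc l.castSucc]; ring,
      show D3 B (Fin.last n) k.castSucc l.castSucc
          = D3 B k.castSucc l.castSucc (Fin.last n) from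
        D3_rot B (Fin.last n) k.castSucc l.castSucc]
    exact hIIIa' k l
  have e_k : ∀ i j l : Fin n,
      (∑ ν, C (Δ ν : R) * (D3 A i.castSucc j.castSucc ν.castSucc *
          D3 B ν.castSucc (Fin.last n) l.castSucc)) =
      ∑ ν, C (Δ ν : R) * (D3 B j.castSucc (Fin.last n) ν.castSucc *
          D3 A ν.castSucc i.castSucc l.castSucc) := by
    intro i j l
    calc (∑ ν, C (Δ ν : R) * (D3 A i.castSucc j.castSucc ν.castSucc *
            D3 B ν.castSucc (Fin.last n) l.castSucc))
        = ∑ ν, C (Δ ν : R) * (D3 A i.castSucc j.castSucc ν.castSucc *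
            D3 B ν.castSucc l.castSucc (Fin.last n)) :=
          Finset.sum_congr rfl fun ν _ => by
            rw [D3_symm23 B ν.castSucc (Fin.last n) l.castSucc]
      _ = ∑ ν, C (Δ ν : R) * (D3 A l.castSucc i.castSucc ν.castSucc *
            D3 B ν.castSucc j.castSucc (Fin.last n)) := (hIIa' l i j).symm
      _ = ∑ ν, C (Δ ν : R) * (D3 B j.castSucc (Fin.last n) ν.castSucc *
            D3 A ν.castSucc i.castSucc l.castSucc) :=
          Finset.sum_congr rfl fun ν _ => by
            rw [show D3 A l.castSucc i.castSucc ν.castSucc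
                = D3 A ν.castSucc i.castSucc l.castSucc from
              D3_symm13 A l.castSucc i.castSucc ν.castSucc,
              show D3 B ν.castSucc j.castSucc (Fin.last n)
                = D3 B j.castSucc (Fin.last n) ν.castSucc from
              D3_rot B ν.castSucc j.castSucc (Fin.last n)]
            ring
  have e_j : ∀ i k l : Fin n,
      (∑ ν, C (Δ ν : R) * (D3 B i.castSucc (Fin.last n) ν.castSucc *
          D3 A ν.castSucc k.castSucc l.castSucc)) =
      ∑ ν, C (Δ ν : R) * (D3 B (Fin.last n) k.castSucc ν.castSucc *
          D3 A ν.castSucc i.castSucc l.castSucc) := by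
    intro i k l
    calc (∑ ν, C (Δ ν : R) * (D3 B i.castSucc (Fin.last n) ν.castSucc *
            D3 A ν.castSucc k.castSucc l.castSucc))
        = ∑ ν, C (Δ ν : R) * (D3 A k.castSucc l.castSucc ν.castSucc *
            D3 B ν.castSucc i.castSucc (Fin.last n)) :=
          Finset.sum_congr rfl fun ν _ => by
            rw [D3_rot B i.castSucc (Fin.last n) ν.castSucc,
              D3_rot B (Fin.last n) ν.castSucc i.castSucc,
              D3_rot A ν.castSucc k.castSucc l.castSucc]
            ring
      _ = ∑ ν, C (Δ ν : R) * (D3 A l.castSucc i.castSucc ν.castSucc *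
            D3 B ν.castSucc k.castSucc (Fin.last n)) := hIIa' k l i
      _ = ∑ ν, C (Δ ν : R) * (D3 B (Fin.last n) k.castSucc ν.castSucc *
            D3 A ν.castSucc i.castSucc l.castSucc) :=
          Finset.sum_congr rfl fun ν _ => by
            rw [show D3 A l.castSucc i.castSucc ν.castSucc
                = D3 A ν.castSucc i.castSucc l.castSucc from
              D3_symm13 A l.castSucc i.castSucc ν.castSucc,
              show D3 B ν.castSucc k.castSucc (Fin.last n)
                = D3 B (Fin.last n) k.castSucc ν.castSucc from
              D3_symm13 B ν.castSucc k.castSucc (Fin.last n)]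
            ring
  have e_i : ∀ j k l : Fin n,
      (∑ ν, C (Δ ν : R) * (D3 B (Fin.last n) j.castSucc ν.castSucc *
          D3 A ν.castSucc k.castSucc l.castSucc)) =
      ∑ ν, C (Δ ν : R) * (D3 A j.castSucc k.castSucc ν.castSucc *
          D3 B ν.castSucc (Fin.last n) l.castSucc) := by
    intro j k l
    calc (∑ ν, C (Δ ν : R) * (D3 B (Fin.last n) j.castSucc ν.castSucc *
            D3 A ν.castSucc k.castSucc l.castSucc))
        = ∑ ν, C (Δ ν : R) * (D3 A k.castSucc l.castSucc ν.castSucc *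
            D3 B ν.castSucc j.castSucc (Fin.last n)) :=
          Finset.sum_congr rfl fun ν _ => by
            rw [show D3 B (Fin.last n) j.castSucc ν.castSucc
                = D3 B ν.castSucc j.castSucc (Fin.last n) from
              D3_symm13 B (Fin.last n) j.castSucc ν.castSucc,
              D3_rot A ν.castSucc k.castSucc l.castSucc]
            ring
      _ = ∑ ν, C (Δ ν : R) * (D3 A j.castSucc k.castSucc ν.castSucc *
            D3 B ν.castSucc l.castSucc (Fin.last n)) := (hIIa' j k l).symm
      _ = ∑ ν, C (Δ ν : R) * (D3 A j.castSucc k.castSucc ν.castSucc *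
            D3 B ν.castSucc (Fin.last n) l.castSucc) :=
          Finset.sum_congr rfl fun ν _ => by
            rw [show D3 B ν.castSucc l.castSucc (Fin.last n)
                = D3 B ν.castSucc (Fin.last n) l.castSucc from
              D3_symm23 B ν.castSucc l.castSucc (Fin.last n)]
  have wdvv : ∀ i j k l : Fin (n+1),
      (∑ p, C ((ΔD p : DualNumber R)) * (D3 F i j p * D3 F p k l)) =
      ∑ p, C ((ΔD p : DualNumber R)) * (D3 F j k p * D3 F p i l) := by
    intro i j k l
    rw [key i j k l, key j k i l]
    by_cases hi : i = Fin.last n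
    · subst hi
      by_cases hj : j = Fin.last n
      · subst hj
        by_cases hk : k = Fin.last n
        · subst hk
          -- cases (o,o,o,l) and (o,o,o,o): both sides literally equal
          simp [hcs, hA1, hA2, hA3]
        · obtain ⟨k', rfl⟩ := Fin.exists_castSucc_eq.mpr hk
          by_cases hl : l = Fin.last n
          · subst hl
            -- case (o,o,k,o)
            simp [hcs, hA1, hA2, hA3]
          · obtain ⟨l', rfl⟩ := Fin.exists_castSucc_eq.mpr hl
            -- case (o,o,c,c): LHS nonzero, RHS zero, use m_oo
            have h := congrArg (⇑(MvPolynomial.map (algebraMap R (DualNumber R)))) (e_oo k' l')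
            simp [hcs, hA1, hA2, hA3] at h
            simp [hcs, hA1, hA2, hA3]
            linear_combination C DualNumber.eps * h
      · obtain ⟨j', rfl⟩ := Fin.exists_castSucc_eq.mpr hj
        by_cases hk : k = Fin.last n
        · subst hk
          by_cases hl : l = Fin.last n
          · subst hl
            -- case (o,c,o,o)
            simp [hcs, hA1, hA2, hA3]
            rw [D3_symm12 B (Fin.last n) j'.castSucc (Fin.last n)]
          · obtain ⟨l', rfl⟩ := Fin.exists_castSucc_eq.mpr hl
            -- case (o,c,o,c): both sides zero
            simp [hcs, hA1, hA2, hA3]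
        · obtain ⟨k', rfl⟩ := Fin.exists_castSucc_eq.mpr hk
          by_cases hl : l = Fin.last n
          · subst hl
            -- case (o,c,c,o): LHS 0, RHS mIIIa j k
            have h := congrArg (⇑(MvPolynomial.map (algebraMap R (DualNumber R)))) (hIIIa' j' k')
            simp [hcs, hA1, hA2, hA3] at h
            simp [hcs, hA1, hA2, hA3]
            linear_combination (-(C DualNumber.eps)) * h
          · obtain ⟨l', rfl⟩ := Fin.exists_castSucc_eq.mpr hl
            -- case (o,c,c,c): e_i
            have h := congrArg (⇑(MvPolynomial.map (algebraMap R (DualNumber R)))) (e_i j' k' l')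
            simp [hcs, hA1, hA2, hA3] at h
            simp [hcs, hA1, hA2, hA3]
            linear_combination C DualNumber.eps * h
    · obtain ⟨i', rfl⟩ := Fin.exists_castSucc_eq.mpr hi
      by_cases hj : j = Fin.last n
      · subst hj
        by_cases hk : k = Fin.last n
        · subst hk
          by_cases hl : l = Fin.last n
          · subst hl
            -- case (c,o,o,o)
            simp [hcs, hA1, hA2, hA3]
            rw [D3_symm12 B (Fin.last n) i'.castSucc (Fin.last n)]
          · obtain ⟨l', rfl⟩ := Fin.exists_castSucc_eq.mpr hl
            -- case (c,o,o,c): LHS 0, RHS m_oo i l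
            have h := congrArg (⇑(MvPolynomial.map (algebraMap R (DualNumber R)))) (e_oo i' l')
            simp [hcs, hA1, hA2, hA3] at h
            simp [hcs, hA1, hA2, hA3]
            linear_combination (-(C DualNumber.eps)) * h
        · obtain ⟨k', rfl⟩ := Fin.exists_castSucc_eq.mpr hk
          by_cases hl : l = Fin.last n
          · subst hl
            -- case (c,o,c,o): both zero
            simp [hcs, hA1, hA2, hA3]
          · obtain ⟨l', rfl⟩ := Fin.exists_castSucc_eq.mpr hl
            -- case (c,o,c,c): e_j
            have h := congrArg (⇑(MvPolynomial.map (algebraMap R (DualNumber R)))) (e_j i' k' l')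
            simp [hcs, hA1, hA2, hA3] at h
            simp [hcs, hA1, hA2, hA3]
            linear_combination C DualNumber.eps * h
      · obtain ⟨j', rfl⟩ := Fin.exists_castSucc_eq.mpr hj
        by_cases hk : k = Fin.last n
        · subst hk
          by_cases hl : l = Fin.last n
          · subst hl
            -- case (c,c,o,o): LHS mIIIa i j, RHS 0
            have h := congrArg (⇑(MvPolynomial.map (algebraMap R (DualNumber R)))) (hIIIa' i' j')
            simp [hcs, hA1, hA2, hA3] at h
            simp [hcs, hA1, hA2, hA3]
            linear_combination C DualNumber.eps * h
          · obtain ⟨l', rfl⟩ := Fin.exists_castSucc_eq.mpr hl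
            -- case (c,c,o,c): e_k
            have h := congrArg (⇑(MvPolynomial.map (algebraMap R (DualNumber R)))) (e_k i' j' l')
            simp [hcs, hA1, hA2, hA3] at h
            simp [hcs, hA1, hA2, hA3]
            linear_combination C DualNumber.eps * h
        · obtain ⟨k', rfl⟩ := Fin.exists_castSucc_eq.mpr hk
          by_cases hl : l = Fin.last n
          · subst hl
            -- case (c,c,c,o): hIIa'
            have h := congrArg (⇑(MvPolynomial.map (algebraMap R (DualNumber R)))) (hIIa' i' j' k')
            simp [hcs, hA1, hA2, hA3] at h
            simp [hcs, hA1, hA2, hA3]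
            linear_combination C DualNumber.eps * h
          · obtain ⟨l', rfl⟩ := Fin.exists_castSucc_eq.mpr hl
            -- case (c,c,c,c): hIc' and hIa
            have h1 := congrArg (⇑(MvPolynomial.map (algebraMap R (DualNumber R)))) (hIc' i' j' k' l')
            have h2 := congrArg (⇑(MvPolynomial.map (algebraMap R (DualNumber R)))) (hIa i' j' k' l')
            simp [hcs, hA1, hA2, hA3] at h1
            simp [hcs, hA1, hA2, hA3] at h2
            simp [hcs, hA1, hA2, hA3]
            linear_combination h1 + C DualNumber.eps * h2
  refine ⟨fun a b => qmul_comm' ΔD F a b, fun a b c => ?_, fun a b c => ?_⟩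
  · rw [qmul_qmul_left, qmul_qmul_right]
    funext μ
    refine Finset.sum_congr rfl fun i _ => Finset.sum_congr rfl fun j _ =>
      Finset.sum_congr rfl fun q _ => ?_
    rw [wdvv i j q μ]
  · rw [qpair_qmul_left, qpair_qmul_right]
    exact sum_comm3 _
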